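/- Let N, M, K be positive natural numbers, let L ≥ 2 be an integer, let E = {exp(i(2πm/L + π/L)) : m = 0, 1, …, L−1} ⊂ ℂ, and let S = {V ∈ ℂ^{N×M} : every entry of V belongs to E}. Fix B ∈ ℂ^{N×K} and W ∈ ℂ^{M×K}, and define f(V) = ‖B − V W‖_F² for V ∈ ℂ^{N×M}. Then there exists η̄ > 0 such that for every η > η̄ the following holds: every global minimizer of F_η(V) := f(V) − η‖V‖_F² over the convex hull of S (taken in ℂ^{N×M} viewed as a real vector space ℝ^{2NM}) belongs to S, and a matrix V ∈ S is a global minimizer of F_η over the convex hull of S if and only if it is a global minimizer of f over S. -/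

import Mathlib

open scoped BigOperators
open Complex Finset

lemma quad_form {N M K : ℕ} (B : Matrix (Fin N) (Fin K) ℂ) (W : Matrix (Fin M) (Fin K) ℂ)
    (η : ℝ) (V : Matrix (Fin N) (Fin M) ℂ) (i : Fin N) (j : Fin M) :
    ∃ (α : ℝ) (c : ℂ), ∀ z : ℂ,
      (∑ i', ∑ k, normSq ((B - (V.updateRow i (Function.update (V i) j z)) * W) i' k))
        - η * ∑ i', ∑ j', normSq ((V.updateRow i (Function.update (V i) j z)) i' j')
      = α - (η - ∑ k, normSq (W j k)) * normSq z - 2 * (z * (starRingEnd ℂ) c).re := by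
  set A : Fin K → ℂ := fun k => B i k - ∑ j' ∈ univ.erase j, V i j' * W j' k with hA
  refine ⟨(∑ k, normSq (A k))
      + (∑ i' ∈ univ.erase i, ∑ k, normSq ((B - V * W) i' k))
      - η * ((∑ j' ∈ univ.erase j, normSq (V i j'))
      + ∑ i' ∈ univ.erase i, ∑ j', normSq (V i' j')),
    ∑ k, A k * (starRingEnd ℂ) (W j k), fun z => ?_⟩
  have hrow : ∀ k, (B - (V.updateRow i (Function.update (V i) j z)) * W) i k
      = A k - z * W j k := by
    intro k
    simp only [Matrix.sub_apply, Matrix.mul_apply, Matrix.updateRow_self]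
    rw [← Finset.add_sum_erase _ _ (Finset.mem_univ j)]
    simp only [Function.update_self, hA]
    rw [Finset.sum_congr rfl (fun x hx => by
      rw [Function.update_of_ne (Finset.ne_of_mem_erase hx)])]
    ring
  have hrow' : ∀ i' ∈ univ.erase i, ∀ k,
      (B - (V.updateRow i (Function.update (V i) j z)) * W) i' k = (B - V * W) i' k := by
    intro i' hi' k
    simp [Matrix.sub_apply, Matrix.mul_apply,
      Matrix.updateRow_ne (Finset.ne_of_mem_erase hi')]
  have h1 : (∑ i', ∑ k, normSq ((B - (V.updateRow i (Function.update (V i) j z)) * W) i' k))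
      = ∑ k, normSq (A k - z * W j k)
        + ∑ i' ∈ univ.erase i, ∑ k, normSq ((B - V * W) i' k) := by
    rw [← Finset.add_sum_erase _ _ (Finset.mem_univ i)]
    congr 1
    · exact Finset.sum_congr rfl fun k _ => by rw [hrow k]
    · exact Finset.sum_congr rfl fun i' hi' => Finset.sum_congr rfl fun k _ => by
        rw [hrow' i' hi' k]
  have h2 : (∑ i', ∑ j', normSq ((V.updateRow i (Function.update (V i) j z)) i' j'))
      = normSq z + (∑ j' ∈ univ.erase j, normSq (V i j'))
        + ∑ i' ∈ univ.erase i, ∑ j', normSq (V i' j') := by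
    rw [← Finset.add_sum_erase _ _ (Finset.mem_univ i)]
    congr 1
    · rw [← Finset.add_sum_erase _ (fun j' => normSq ((V.updateRow i (Function.update (V i) j z)) i j')) (Finset.mem_univ j)]
      simp only [Matrix.updateRow_self, Function.update_self]
      congr 1
      exact Finset.sum_congr rfl fun x hx => by
        rw [Function.update_of_ne (Finset.ne_of_mem_erase hx)]
    · exact Finset.sum_congr rfl fun i' hi' => Finset.sum_congr rfl fun j' _ => by
        rw [Matrix.updateRow_ne (Finset.ne_of_mem_erase hi')]
  rw [h1, h2]
  have h3 : ∑ k, normSq (A k - z * W j k)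
      = ∑ k, normSq (A k) + (∑ k, normSq (W j k)) * normSq z
        - 2 * (z * (starRingEnd ℂ) (∑ k, A k * (starRingEnd ℂ) (W j k))).re := by
    rw [map_sum, Finset.mul_sum, Complex.re_sum, Finset.mul_sum, Finset.sum_mul,
      ← Finset.sum_add_distrib, ← Finset.sum_sub_distrib]
    exact Finset.sum_congr rfl fun k _ => by
      simp only [Complex.normSq_apply, Complex.mul_re, Complex.mul_im, Complex.sub_re,
        Complex.sub_im, Complex.conj_re, Complex.conj_im]
      ring
  rw [h3]; ring

lemma complete_sq (a : ℝ) (ha : a ≠ 0) (c z : ℂ) :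
    - a * normSq z - 2 * (z * (starRingEnd ℂ) c).re
      = a * normSq ((a⁻¹ : ℝ) • c) - a * normSq (z + (a⁻¹ : ℝ) • c) := by
  simp only [Complex.normSq_apply, Complex.mul_re, Complex.add_re, Complex.add_im,
    Complex.conj_re, Complex.conj_im, Complex.smul_re, Complex.smul_im, smul_eq_mul]
  field_simp
  ring

lemma conv_max (E' : Finset ℂ) (d z : ℂ) (hz : z ∈ convexHull ℝ (E' : Set ℂ)) :
    ∃ e ∈ (E' : Set ℂ), normSq (z + d) ≤ normSq (e + d) := by
  have hne : E'.Nonempty := by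
    by_contra h
    rw [Finset.not_nonempty_iff_eq_empty] at h
    simp [h] at hz
  obtain ⟨e, he, hmax⟩ := E'.exists_max_image (fun e => ‖e + d‖) hne
  refine ⟨e, he, ?_⟩
  have hball : (E' : Set ℂ) ⊆ Metric.closedBall (-d) ‖e + d‖ := by
    intro x hx
    simp only [Metric.mem_closedBall, dist_eq_norm, sub_neg_eq_add]
    exact hmax x hx
  have hz' : z ∈ Metric.closedBall (-d) ‖e + d‖ :=
    convexHull_min hball (convex_closedBall _ _) hz
  simp only [Metric.mem_closedBall, dist_eq_norm, sub_neg_eq_add] at hz'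
  have h1 : ‖z + d‖ ^ 2 ≤ ‖e + d‖ ^ 2 := pow_le_pow_left₀ (norm_nonneg _) hz' 2
  simpa [← Complex.sq_norm] using h1

lemma strict_comb (α a t s : ℝ) (c x y : ℂ) (hts : t + s = 1) :
    t * (α - a * normSq x - 2 * (x * (starRingEnd ℂ) c).re)
      + s * (α - a * normSq y - 2 * (y * (starRingEnd ℂ) c).re)
    = (α - a * normSq (t • x + s • y) - 2 * ((t • x + s • y) * (starRingEnd ℂ) c).re)
      - a * t * s * normSq (x - y) := by
  have hs : s = 1 - t := by linarith
  subst hs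
  simp only [Complex.normSq_apply, Complex.mul_re, Complex.add_re, Complex.add_im,
    Complex.sub_re, Complex.sub_im, Complex.conj_re, Complex.conj_im,
    Complex.smul_re, Complex.smul_im, smul_eq_mul]
  ring

/-- Lemma 1 of the paper: for a large enough penalty η, the discrete-phase analog
precoder design problem is equivalent to its penalized relaxation over the convex hull. -/
theorem stmt0 (N M K : ℕ) (hN : 0 < N) (hM : 0 < M) (hK : 0 < K)
    (L : ℕ) (hL : 2 ≤ L)
    (E : Set ℂ)
    (hE : E = {z : ℂ | ∃ m : ℕ, m < L ∧
      z = Complex.exp (Complex.I * ((2 * Real.pi * m / L + Real.pi / L : ℝ) : ℂ))})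
    (S : Set (Matrix (Fin N) (Fin M) ℂ))
    (hS : S = {V | ∀ i j, V i j ∈ E})
    (B : Matrix (Fin N) (Fin K) ℂ) (W : Matrix (Fin M) (Fin K) ℂ)
    (f : Matrix (Fin N) (Fin M) ℂ → ℝ)
    (hf : ∀ V, f V = ∑ i, ∑ k, ‖(B - V * W) i k‖ ^ 2) :
    ∃ ηbar : ℝ, 0 < ηbar ∧ ∀ η : ℝ, ηbar < η →
      (∀ V ∈ convexHull ℝ S,
        IsMinOn (fun V => f V - η * ∑ i, ∑ j, ‖V i j‖ ^ 2) (convexHull ℝ S) V → V ∈ S) ∧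
      (∀ V ∈ S,
        (IsMinOn (fun V => f V - η * ∑ i, ∑ j, ‖V i j‖ ^ 2) (convexHull ℝ S) V ↔
          IsMinOn f S V)) := by
  -- the finite set of phases
  set E' : Finset ℂ := (Finset.range L).image
    (fun m : ℕ => Complex.exp (Complex.I * ((2 * Real.pi * m / L + Real.pi / L : ℝ) : ℂ))) with hE'def
  have hE'coe : (E' : Set ℂ) = E := by
    rw [hE]
    ext z
    simp only [hE'def, Finset.coe_image, Finset.coe_range, Set.mem_image, Set.mem_Iio,
      Set.mem_setOf_eq]
    constructor
    · rintro ⟨m, hm, rfl⟩; exact ⟨m, hm, rfl⟩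
    · rintro ⟨m, hm, rfl⟩; exact ⟨m, hm, rfl⟩
  -- entries of E have unit norm
  have hnorm1 : ∀ z ∈ E, normSq z = 1 := by
    intro z hz
    rw [hE] at hz
    obtain ⟨m, _, rfl⟩ := hz
    rw [← Complex.sq_norm, Complex.norm_exp]
    simp [Complex.mul_re]
  have hWnn : (0:ℝ) ≤ ∑ j, ∑ k, normSq (W j k) :=
    Finset.sum_nonneg fun _ _ => Finset.sum_nonneg fun _ _ => normSq_nonneg _
  refine ⟨1 + ∑ j, ∑ k, normSq (W j k), by linarith, fun η hη => ?_⟩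
  have hapos : ∀ j : Fin M, 0 < η - ∑ k, normSq (W j k) := by
    intro j
    have h1 : ∑ k, normSq (W j k) ≤ ∑ j, ∑ k, normSq (W j k) :=
      Finset.single_le_sum (f := fun j => ∑ k, normSq (W j k))
        (fun j _ => Finset.sum_nonneg fun k _ => normSq_nonneg _) (Finset.mem_univ j)
    linarith
  set g : Matrix (Fin N) (Fin M) ℂ → ℝ :=
    fun V => f V - η * ∑ i, ∑ j, ‖V i j‖ ^ 2 with hgdef
  have hg : ∀ V, g V = (∑ i', ∑ k, normSq ((B - V * W) i' k))
      - η * ∑ i', ∑ j', normSq (V i' j') := by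
    intro V
    simp only [hgdef, hf, Complex.sq_norm]
  -- entrywise characterization of the convex hull (⊆ direction)
  have hsubset : ∀ V ∈ convexHull ℝ S, ∀ i j, V i j ∈ convexHull ℝ E := by
    have h : convexHull ℝ S ⊆ {V : Matrix (Fin N) (Fin M) ℂ | ∀ i j, V i j ∈ convexHull ℝ E} := by
      apply convexHull_min
      · intro V hV i j
        rw [hS] at hV
        exact subset_convexHull ℝ E (hV i j)
      · intro x hx y hy a b ha hb hab i j
        have := (convex_convexHull ℝ E) (hx i j) (hy i j) ha hb hab
        simpa using this
    exact fun V hV => h hV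
  -- entrywise characterization (⊇ direction)
  have hmemconv : ∀ U : Matrix (Fin N) (Fin M) ℂ,
      (∀ i j, U i j ∈ convexHull ℝ E) → U ∈ convexHull ℝ S := by
    intro U hU
    have hSpi : S = Set.pi Set.univ (fun _ : Fin N => Set.pi Set.univ fun _ : Fin M => E) := by
      rw [hS]
      exact Set.ext fun V => ⟨fun h i _ j _ => h i j,
        fun h i j => h i (Set.mem_univ i) j (Set.mem_univ j)⟩
    rw [hSpi]
    exact mem_convexHull_pi fun i _ => mem_convexHull_pi fun j _ => hU i j
  -- one-entry descent step
  have hstep : ∀ (U : Matrix (Fin N) (Fin M) ℂ) (i : Fin N) (j : Fin M),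
      U i j ∈ convexHull ℝ E →
      ∃ e ∈ E, g (U.updateRow i (Function.update (U i) j e)) ≤ g U := by
    intro U i j hz
    obtain ⟨α, c, hq⟩ := quad_form B W η U i j
    set a : ℝ := η - ∑ k, normSq (W j k) with haa
    have ha' : 0 < a := hapos j
    have hgq : ∀ z, g (U.updateRow i (Function.update (U i) j z))
        = α - a * normSq z - 2 * (z * (starRingEnd ℂ) c).re := by
      intro z; rw [hg]; exact hq z
    have hgq2 : ∀ z, g (U.updateRow i (Function.update (U i) j z))
        = α + a * normSq ((a⁻¹ : ℝ) • c) - a * normSq (z + (a⁻¹ : ℝ) • c) := by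
      intro z
      rw [hgq z]
      have := complete_sq a ha'.ne' c z
      linarith
    rw [← hE'coe] at hz
    obtain ⟨e, he, hle⟩ := conv_max E' ((a⁻¹ : ℝ) • c) (U i j) hz
    refine ⟨e, by rwa [← hE'coe], ?_⟩
    have hself : U.updateRow i (Function.update (U i) j (U i j)) = U := by
      rw [Function.update_eq_self]; exact Matrix.updateRow_eq_self U i
    calc g (U.updateRow i (Function.update (U i) j e))
        = α + a * normSq ((a⁻¹ : ℝ) • c) - a * normSq (e + (a⁻¹ : ℝ) • c) := hgq2 e
      _ ≤ α + a * normSq ((a⁻¹ : ℝ) • c) - a * normSq (U i j + (a⁻¹ : ℝ) • c) := by nlinarith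
      _ = g U := by rw [← hgq2 (U i j), hself]
  -- sum of squared norms is constant on S
  have hconst : ∀ X ∈ S, (∑ i, ∑ j, ‖X i j‖ ^ 2 : ℝ) = (N : ℝ) * M := by
    intro X hX
    rw [hS] at hX
    have h1 : ∀ i j, (‖X i j‖ ^ 2 : ℝ) = 1 := by
      intro i j
      rw [Complex.sq_norm]
      exact hnorm1 _ (hX i j)
    simp only [h1, Finset.sum_const, Finset.card_univ, Fintype.card_fin, nsmul_eq_mul, mul_one]
  -- descent to a point of S
  have hdesc : ∀ T : Finset (Fin N × Fin M), ∀ U : Matrix (Fin N) (Fin M) ℂ,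
      (∀ i j, U i j ∈ convexHull ℝ E) →
      (∀ p : Fin N × Fin M, p ∉ T → U p.1 p.2 ∈ E) →
      ∃ U' ∈ S, g U' ≤ g U := by
    intro T
    induction T using Finset.induction_on with
    | empty =>
      intro U h1 h2
      exact ⟨U, by rw [hS]; exact fun i j => h2 (i, j) (Finset.notMem_empty _), le_rfl⟩
    | @insert p T' hpT ih =>
      intro U h1 h2
      obtain ⟨e, he, hle⟩ := hstep U p.1 p.2 (h1 p.1 p.2)
      set U₂ := U.updateRow p.1 (Function.update (U p.1) p.2 e) with hU₂
      have hU₂entry : ∀ i j, U₂ i j = if i = p.1 ∧ j = p.2 then e else U i j := by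
        intro i j
        by_cases hi : i = p.1
        · subst hi
          rw [hU₂, Matrix.updateRow_self]
          by_cases hj : j = p.2
          · subst hj; simp
          · simp [Function.update_of_ne hj, hj]
        · rw [hU₂, Matrix.updateRow_ne hi]
          simp [hi]
      have h1' : ∀ i j, U₂ i j ∈ convexHull ℝ E := by
        intro i j
        rw [hU₂entry]
        split
        · exact subset_convexHull ℝ E he
        · exact h1 i j
      have h2' : ∀ q : Fin N × Fin M, q ∉ T' → U₂ q.1 q.2 ∈ E := by
        intro q hq
        rw [hU₂entry]
        split
        · exact he
        · rename_i hne
          refine h2 q ?_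
          simp only [Finset.mem_insert, not_or]
          refine ⟨?_, hq⟩
          rintro rfl
          exact hne ⟨rfl, rfl⟩
      obtain ⟨U', hU', hle'⟩ := ih U₂ h1' h2'
      exact ⟨U', hU', hle'.trans hle⟩
  constructor
  · -- Part 1: minimizers of the penalized problem lie in S
    intro V hV hmin
    by_contra hVnotS
    have hex : ∃ i j, V i j ∉ E := by
      rw [hS] at hVnotS
      simp only [Set.mem_setOf_eq] at hVnotS
      push_neg at hVnotS
      exact hVnotS
    obtain ⟨i, j, hij⟩ := hex
    have hz : V i j ∈ convexHull ℝ E := hsubset V hV i j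
    have hnotext : V i j ∉ (convexHull ℝ E).extremePoints ℝ :=
      fun h => hij (extremePoints_convexHull_subset h)
    have hQ : ¬ ∀ x₁ ∈ convexHull ℝ E, ∀ x₂ ∈ convexHull ℝ E,
        V i j ∈ openSegment ℝ x₁ x₂ → x₁ = V i j ∧ x₂ = V i j :=
      fun h => hnotext (mem_extremePoints.mpr ⟨hz, h⟩)
    push_neg at hQ
    obtain ⟨x, hx, y, hy, hseg, hne⟩ := hQ
    obtain ⟨t, s, ht, hs, hts, hxy⟩ := hseg
    have hxyne : x ≠ y := by
      rintro rfl
      have hxz : x = V i j := by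
        rw [← hxy, ← add_smul, hts, one_smul]
      exact hne hxz hxz
    obtain ⟨α, c, hq⟩ := quad_form B W η V i j
    set a : ℝ := η - ∑ k, normSq (W j k) with haa
    have ha' : 0 < a := hapos j
    have hgq : ∀ z, g (V.updateRow i (Function.update (V i) j z))
        = α - a * normSq z - 2 * (z * (starRingEnd ℂ) c).re := by
      intro z; rw [hg]; exact hq z
    have hself : V.updateRow i (Function.update (V i) j (V i j)) = V := by
      rw [Function.update_eq_self]; exact Matrix.updateRow_eq_self V i
    have hGV : g V = α - a * normSq (V i j) - 2 * ((V i j) * (starRingEnd ℂ) c).re := by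
      have h := hgq (V i j); rwa [hself] at h
    have hmemupd : ∀ w : ℂ, w ∈ convexHull ℝ E →
        V.updateRow i (Function.update (V i) j w) ∈ convexHull ℝ S := by
      intro w hw
      apply hmemconv
      intro i' j'
      by_cases hi : i' = i
      · subst hi
        rw [Matrix.updateRow_self]
        by_cases hj : j' = j
        · subst hj; rw [Function.update_self]; exact hw
        · rw [Function.update_of_ne hj]; exact hsubset V hV i' j'
      · rw [Matrix.updateRow_ne hi]; exact hsubset V hV i' j'
    have hminx : g V ≤ g (V.updateRow i (Function.update (V i) j x)) :=
      isMinOn_iff.mp hmin _ (hmemupd x hx)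
    have hminy : g V ≤ g (V.updateRow i (Function.update (V i) j y)) :=
      isMinOn_iff.mp hmin _ (hmemupd y hy)
    rw [hgq x] at hminx
    rw [hgq y] at hminy
    have hcomb := strict_comb α a t s c x y hts
    rw [hxy, ← hGV] at hcomb
    have hpos : 0 < a * t * s * normSq (x - y) := by
      have : 0 < normSq (x - y) := by
        rw [Complex.normSq_pos]
        exact sub_ne_zero.mpr hxyne
      positivity
    have hsum : t * g V + s * g V = g V := by rw [← add_mul, hts, one_mul]
    linarith [mul_le_mul_of_nonneg_left hminx ht.le, mul_le_mul_of_nonneg_left hminy hs.le]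
  · -- Part 2: equivalence on S
    intro V hVS
    constructor
    · intro hmin
      rw [isMinOn_iff]
      intro U hU
      have h1 : g V ≤ g U := isMinOn_iff.mp hmin U (subset_convexHull ℝ S hU)
      simp only [hgdef] at h1
      rw [hconst V hVS, hconst U hU] at h1
      linarith
    · intro hminf
      rw [isMinOn_iff]
      intro U hU
      obtain ⟨U', hU'S, hle⟩ := hdesc Finset.univ U (fun i j => hsubset U hU i j)
        (fun p hp => absurd (Finset.mem_univ p) hp)
      have h1 : f V ≤ f U' := isMinOn_iff.mp hminf U' hU'S
      have h2 : g V ≤ g U' := by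
        simp only [hgdef]
        rw [hconst V hVS, hconst U' hU'S]
        linarith
      exact h2.trans hle
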